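/- Kadison's inequality: if Φ : Mₘ(ℂ) → Mₙ(ℂ) is a unital positive linear map and b is a Hermitian matrix, then Φ(b²) ≥ Φ(b)² in the Loewner order. -/

import Mathlib

open Matrix ComplexOrder

open Finset in
/-- The quadratic-form functional `M ↦ xᴴ M y` as a linear map. -/
private noncomputable def dotFun {n : ℕ} (x y : Fin n → ℂ) :
    Matrix (Fin n) (Fin n) ℂ →ₗ[ℂ] ℂ where
  toFun M := star x ⬝ᵥ M *ᵥ y
  map_add' A B := by simp [add_mulVec, dotProduct_add]
  map_smul' c A := by simp [smul_mulVec, dotProduct_smul, smul_eq_mul]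

private lemma dot_sum_smul {n m : ℕ} (Q : Fin m → Matrix (Fin n) (Fin n) ℂ)
    (c : Fin m → ℂ) (x y : Fin n → ℂ) :
    star x ⬝ᵥ (∑ i, c i • Q i) *ᵥ y = ∑ i, c i * (star x ⬝ᵥ Q i *ᵥ y) := by
  calc star x ⬝ᵥ (∑ i, c i • Q i) *ᵥ y = dotFun x y (∑ i, c i • Q i) := rfl
    _ = ∑ i, dotFun x y (c i • Q i) := map_sum (dotFun x y) _ _
    _ = ∑ i, c i * (star x ⬝ᵥ Q i *ᵥ y) := by
        refine Finset.sum_congr rfl fun i _ => ?_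
        rw [_root_.map_smul, smul_eq_mul]; rfl

/-- Cauchy-Schwarz for the complex dot product. -/
private lemma dot_cs {n : ℕ} (u v : Fin n → ℂ) :
    ‖star u ⬝ᵥ v‖ ^ 2 ≤ (star u ⬝ᵥ u).re * (star v ⬝ᵥ v).re := by
  let u' : EuclideanSpace ℂ (Fin n) := (WithLp.equiv 2 _).symm u
  let v' : EuclideanSpace ℂ (Fin n) := (WithLp.equiv 2 _).symm v
  have h1 : star u ⬝ᵥ v = inner ℂ u' v' := (by rw [dotProduct_comm]; rfl)
  have h2 : (star u ⬝ᵥ u).re = ‖u'‖ ^ 2 := by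
    have e : star u ⬝ᵥ u = inner ℂ u' u' := (by rw [dotProduct_comm]; rfl)
    rw [e, inner_self_eq_norm_sq_to_K (𝕜 := ℂ)]
    norm_cast
  have h3 : (star v ⬝ᵥ v).re = ‖v'‖ ^ 2 := by
    have e : star v ⬝ᵥ v = inner ℂ v' v' := (by rw [dotProduct_comm]; rfl)
    rw [e, inner_self_eq_norm_sq_to_K (𝕜 := ℂ)]
    norm_cast
  rw [h1, h2, h3]
  calc ‖(inner ℂ u' v' : ℂ)‖ ^ 2 ≤ (‖u'‖ * ‖v'‖) ^ 2 := by
        have := norm_inner_le_norm (𝕜 := ℂ) u' v'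
        exact pow_le_pow_left₀ (norm_nonneg _) this 2
    _ = ‖u'‖ ^ 2 * ‖v'‖ ^ 2 := by ring

/-- Cauchy-Schwarz for a positive semidefinite matrix. -/
private lemma psd_cs {n : ℕ} {Q : Matrix (Fin n) (Fin n) ℂ} (hQ : Q.PosSemidef)
    (x y : Fin n → ℂ) :
    ‖star x ⬝ᵥ Q *ᵥ y‖ ^ 2 ≤ (star x ⬝ᵥ Q *ᵥ x).re * (star y ⬝ᵥ Q *ᵥ y).re := by
  obtain ⟨C, rfl⟩ : ∃ C : Matrix (Fin n) (Fin n) ℂ, Q = Cᴴ * C := by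
    open scoped MatrixOrder Matrix.Norms.L2Operator in
    exact CStarAlgebra.nonneg_iff_eq_star_mul_self.mp hQ.nonneg
  have key : ∀ z w : Fin n → ℂ,
      star z ⬝ᵥ (Cᴴ * C) *ᵥ w = star (C *ᵥ z) ⬝ᵥ (C *ᵥ w) := by
    intro z w
    rw [← mulVec_mulVec, dotProduct_mulVec, star_mulVec]
  rw [key, key, key]
  exact dot_cs (C *ᵥ x) (C *ᵥ y)

private lemma hermitian_sum_real_smul {n m : ℕ} (Q : Fin m → Matrix (Fin n) (Fin n) ℂ)
    (hQ : ∀ i, (Q i).IsHermitian) (c : Fin m → ℝ) :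
    (∑ i, ((c i : ℂ) • Q i)).IsHermitian := by
  unfold Matrix.IsHermitian
  rw [conjTranspose_sum]
  refine Finset.sum_congr rfl fun i _ => ?_
  rw [conjTranspose_smul, (hQ i).eq, Complex.star_def, Complex.conj_ofReal]

/-- Key combinatorial lemma: if `Q i` are PSD summing to 1 and `λ` real, then
`∑ λᵢ² Qᵢ - (∑ λᵢ Qᵢ)² ≥ 0`. -/
private lemma key_lemma {n m : ℕ} (Q : Fin m → Matrix (Fin n) (Fin n) ℂ)
    (hQ : ∀ i, (Q i).PosSemidef) (hsum : ∑ i, Q i = 1) (lam : Fin m → ℝ) :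
    ((∑ i, ((lam i ^ 2 : ℝ) : ℂ) • Q i) - (∑ i, ((lam i : ℝ) : ℂ) • Q i) ^ 2).PosSemidef := by
  set T : Matrix (Fin n) (Fin n) ℂ := ∑ i, ((lam i ^ 2 : ℝ) : ℂ) • Q i with hT
  set S : Matrix (Fin n) (Fin n) ℂ := ∑ i, ((lam i : ℝ) : ℂ) • Q i with hS
  have hTherm : T.IsHermitian := hermitian_sum_real_smul Q (fun i => (hQ i).1) (fun i => lam i ^ 2)
  have hSherm : S.IsHermitian := hermitian_sum_real_smul Q (fun i => (hQ i).1) lam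
  refine Matrix.PosSemidef.of_dotProduct_mulVec_nonneg ?_ ?_
  · exact hTherm.sub (hSherm.pow 2)
  intro x
  set y : Fin n → ℂ := S *ᵥ x with hy
  -- basic positivity facts for each i
  have hpos : ∀ (i : Fin m) (z : Fin n → ℂ), 0 ≤ star z ⬝ᵥ Q i *ᵥ z := fun i z => (hQ i).dotProduct_mulVec_nonneg z
  have hre : ∀ (i : Fin m) (z : Fin n → ℂ), 0 ≤ (star z ⬝ᵥ Q i *ᵥ z).re := by
    intro i z; exact (Complex.le_def.mp (hpos i z)).1
  have him : ∀ (i : Fin m) (z : Fin n → ℂ), (star z ⬝ᵥ Q i *ᵥ z).im = 0 := by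
    intro i z; exact ((Complex.le_def.mp (hpos i z)).2).symm
  set a : Fin m → ℝ := fun i => (star x ⬝ᵥ Q i *ᵥ x).re with ha
  set bb : Fin m → ℝ := fun i => (star y ⬝ᵥ Q i *ᵥ y).re with hbb
  set c : Fin m → ℂ := fun i => star x ⬝ᵥ Q i *ᵥ y with hc
  -- x^* T x = ∑ λᵢ² aᵢ as a complex number
  have hTx : star x ⬝ᵥ T *ᵥ x = ∑ i, ((lam i ^ 2 : ℝ) : ℂ) * (star x ⬝ᵥ Q i *ᵥ x) :=
    dot_sum_smul Q _ x x
  have hTxre : (star x ⬝ᵥ T *ᵥ x).re = ∑ i, lam i ^ 2 * a i := by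
    rw [hTx, Complex.re_sum]
    refine Finset.sum_congr rfl fun i _ => ?_
    simp only [ha]
    rw [Complex.mul_re, him i x, Complex.ofReal_re, Complex.ofReal_im]
    ring
  have hTxim : (star x ⬝ᵥ T *ᵥ x).im = 0 := by
    rw [hTx, Complex.im_sum]
    refine Finset.sum_eq_zero fun i _ => ?_
    rw [Complex.mul_im, him i x, Complex.ofReal_im]
    ring
  -- y^* y computations
  have hxy : star y ⬝ᵥ y = star x ⬝ᵥ S *ᵥ y := by
    conv_lhs => rw [hy, star_mulVec]
    rw [← dotProduct_mulVec, hSherm.eq]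
  have hyy1 : star y ⬝ᵥ y = ∑ i, ((lam i : ℝ) : ℂ) * c i := by
    rw [hxy, dot_sum_smul Q _ x y]
  have hyy2 : star y ⬝ᵥ y = ∑ i, (star y ⬝ᵥ Q i *ᵥ y) := by
    have : star y ⬝ᵥ (∑ i, Q i) *ᵥ y = ∑ i, (star y ⬝ᵥ Q i *ᵥ y) := by
      simpa using dot_sum_smul Q (fun _ => (1 : ℂ)) y y
    rw [← this, hsum, one_mulVec]
  have hyyre : (star y ⬝ᵥ y).re = ∑ i, bb i := by
    rw [hyy2, Complex.re_sum]
  have hyyim : (star y ⬝ᵥ y).im = 0 := by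
    rw [hyy2, Complex.im_sum]
    exact Finset.sum_eq_zero fun i _ => him i y
  have hyynn : 0 ≤ (star y ⬝ᵥ y).re := hyyre ▸ Finset.sum_nonneg fun i _ => hre i y
  -- the scalar Cauchy-Schwarz chain
  set r : Fin m → ℝ := fun i => Real.sqrt ((lam i ^ 2 * a i) * bb i) with hr
  have hstep1 : (star y ⬝ᵥ y).re ≤ ∑ i, r i := by
    rw [hyy1, Complex.re_sum]
    refine Finset.sum_le_sum fun i _ => ?_
    have h1 : (((lam i : ℝ) : ℂ) * c i).re = lam i * (c i).re := by
      simp [Complex.mul_re]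
    rw [h1]
    have h2 : lam i * (c i).re ≤ |lam i| * ‖c i‖ := by
      calc lam i * (c i).re ≤ |lam i * (c i).re| := le_abs_self _
        _ = |lam i| * |(c i).re| := abs_mul _ _
        _ ≤ |lam i| * ‖c i‖ := by
            exact mul_le_mul_of_nonneg_left (Complex.abs_re_le_norm _) (abs_nonneg _)
    refine h2.trans ?_
    have hcs : ‖c i‖ ^ 2 ≤ a i * bb i := psd_cs (hQ i) x y
    have h3 : (|lam i| * ‖c i‖) ^ 2 ≤ lam i ^ 2 * a i * bb i := by
      rw [mul_pow, sq_abs, mul_assoc]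
      exact mul_le_mul_of_nonneg_left hcs (sq_nonneg _)
    simp only [hr]
    exact Real.le_sqrt_of_sq_le h3
  have hstep2 : (∑ i, r i) ^ 2 ≤ (∑ i, lam i ^ 2 * a i) * ∑ i, bb i := by
    refine Finset.sum_sq_le_sum_mul_sum_of_sq_eq_mul Finset.univ
      (fun i _ => mul_nonneg (sq_nonneg _) (hre i x)) (fun i _ => hre i y) fun i _ => ?_
    rw [hr]
    exact Real.sq_sqrt (mul_nonneg (mul_nonneg (sq_nonneg _) (hre i x)) (hre i y))
  -- conclude (y^*y).re ≤ (x^* T x).re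
  have hmain : (star y ⬝ᵥ y).re ≤ (star x ⬝ᵥ T *ᵥ x).re := by
    rcases eq_or_lt_of_le hyynn with h0 | h0
    · rw [← h0, hTxre]
      exact Finset.sum_nonneg fun i _ => mul_nonneg (sq_nonneg _) (hre i x)
    · have hrs : 0 ≤ ∑ i, r i := Finset.sum_nonneg fun i _ => Real.sqrt_nonneg _
      have h1 : ((star y ⬝ᵥ y).re) ^ 2 ≤ (∑ i, r i) ^ 2 :=
        pow_le_pow_left₀ hyynn hstep1 2
      have h2 : ((star y ⬝ᵥ y).re) ^ 2 ≤ (star x ⬝ᵥ T *ᵥ x).re * (star y ⬝ᵥ y).re :=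
        calc ((star y ⬝ᵥ y).re) ^ 2 ≤ (∑ i, r i) ^ 2 := h1
          _ ≤ (∑ i, lam i ^ 2 * a i) * ∑ i, bb i := hstep2
          _ = (star x ⬝ᵥ T *ᵥ x).re * (star y ⬝ᵥ y).re := by rw [hTxre, hyyre]
      exact le_of_mul_le_mul_right (by rwa [sq] at h2) h0
  -- assemble
  have hquad : star x ⬝ᵥ (T - S ^ 2) *ᵥ x = star x ⬝ᵥ T *ᵥ x - star y ⬝ᵥ y := by
    rw [sub_mulVec, dotProduct_sub]
    congr 1
    rw [pow_two, ← mulVec_mulVec, ← hy, ← hxy]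
  rw [hquad, Complex.le_def]
  constructor
  · simpa using hmain
  · simp [hyyim, hTxim]

open Matrix in
/-- Kadison's inequality: for a unital positive linear map `Φ` and Hermitian `b`,
`Φ(b²) ≥ Φ(b)²` in the Loewner order. -/
theorem kadison_inequality {m n : ℕ}
    (Φ : Matrix (Fin m) (Fin m) ℂ →ₗ[ℂ] Matrix (Fin n) (Fin n) ℂ)
    (hΦ1 : Φ 1 = 1)
    (hΦ : ∀ A : Matrix (Fin m) (Fin m) ℂ, A.PosSemidef → (Φ A).PosSemidef)
    (b : Matrix (Fin m) (Fin m) ℂ) (hb : b.IsHermitian) :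
    (Φ (b ^ 2) - (Φ b) ^ 2).PosSemidef := by
  classical
  set U : Matrix (Fin m) (Fin m) ℂ := (hb.eigenvectorUnitary : Matrix (Fin m) (Fin m) ℂ) with hU
  set lam : Fin m → ℝ := hb.eigenvalues with hlam
  have hUU : U * star U = 1 := (Matrix.mem_unitaryGroup_iff).mp hb.eigenvectorUnitary.2
  have hUU' : star U * U = 1 := (Matrix.mem_unitaryGroup_iff').mp hb.eigenvectorUnitary.2
  -- diagonal indicator matrices
  set E : Fin m → Matrix (Fin m) (Fin m) ℂ :=
    fun i => diagonal (fun j => if j = i then (1 : ℂ) else 0) with hE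
  set P : Fin m → Matrix (Fin m) (Fin m) ℂ := fun i => U * E i * star U with hP
  have hEsum : ∑ i, E i = 1 := by
    ext j k
    simp only [hE, Matrix.sum_apply, diagonal_apply, Matrix.one_apply]
    by_cases h : j = k
    · subst h
      simp [Finset.sum_ite_eq]
    · simp [h]
  have hdiag : ∀ d : Fin m → ℂ, diagonal d = ∑ i, d i • E i := by
    intro d
    ext j k
    simp only [hE, Matrix.sum_apply, Matrix.smul_apply, diagonal_apply, smul_eq_mul]
    by_cases h : j = k
    · subst h
      simp [mul_ite, mul_one, mul_zero, Finset.sum_ite_eq]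
    · simp [h]
  have hPsum : ∑ i, P i = 1 := by
    rw [hP]
    simp_rw [← Finset.sum_mul, ← Finset.mul_sum]
    rw [hEsum, mul_one, hUU]
  have hPpsd : ∀ i, (P i).PosSemidef := by
    intro i
    refine Matrix.PosSemidef.mul_mul_conjTranspose_same ?_ U
    rw [hE]
    refine posSemidef_diagonal_iff.mpr fun j => ?_
    split <;> simp
  -- b = ∑ λᵢ • P i
  have hbdecomp : b = ∑ i, ((lam i : ℝ) : ℂ) • P i := by
    have h := hb.spectral_theorem
    rw [show (RCLike.ofReal ∘ hb.eigenvalues : Fin m → ℂ) = fun i => ((lam i : ℝ) : ℂ) from rfl]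
      at h
    rw [Unitary.conjStarAlgAut_apply] at h
    rw [h, hdiag]
    rw [Finset.mul_sum, Finset.sum_mul]
    refine Finset.sum_congr rfl fun i _ => ?_
    rw [mul_smul_comm, smul_mul_assoc]
  -- b² = ∑ λᵢ² • P i
  have hb2decomp : b ^ 2 = ∑ i, ((lam i ^ 2 : ℝ) : ℂ) • P i := by
    have h := hb.spectral_theorem
    rw [show (RCLike.ofReal ∘ hb.eigenvalues : Fin m → ℂ) = fun i => ((lam i : ℝ) : ℂ) from rfl]
      at h
    rw [Unitary.conjStarAlgAut_apply] at h
    have h2 : b ^ 2 = U * diagonal (fun i => ((lam i ^ 2 : ℝ) : ℂ)) * star U := by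
      rw [pow_two]
      conv_lhs => rw [h]
      rw [show (U * diagonal (fun i => ((lam i : ℝ) : ℂ)) * star U) *
          (U * diagonal (fun i => ((lam i : ℝ) : ℂ)) * star U)
          = U * (diagonal (fun i => ((lam i : ℝ) : ℂ)) * (star U * U) *
            diagonal (fun i => ((lam i : ℝ) : ℂ))) * star U by
          simp only [Matrix.mul_assoc]]
      rw [hUU', mul_one, diagonal_mul_diagonal]
      congr 2
      funext i
      push_cast
      ring
    rw [h2, hdiag]
    rw [Finset.mul_sum, Finset.sum_mul]
    refine Finset.sum_congr rfl fun i _ => ?_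
    rw [mul_smul_comm, smul_mul_assoc]
  -- push through Φ
  set Q : Fin m → Matrix (Fin n) (Fin n) ℂ := fun i => Φ (P i) with hQdef
  have hQpsd : ∀ i, (Q i).PosSemidef := fun i => hΦ _ (hPpsd i)
  have hQsum : ∑ i, Q i = 1 := by
    rw [hQdef]
    simp_rw [← map_sum]
    rw [hPsum, hΦ1]
  have hΦb : Φ b = ∑ i, ((lam i : ℝ) : ℂ) • Q i := by
    rw [hbdecomp, map_sum]
    simp [hQdef]
  have hΦb2 : Φ (b ^ 2) = ∑ i, ((lam i ^ 2 : ℝ) : ℂ) • Q i := by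
    rw [hb2decomp, map_sum]
    simp [hQdef]
  rw [hΦb, hΦb2]
  exact key_lemma Q hQpsd hQsum lam
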